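/- arXiv:2204.12723 — 2 statements merged into one kernel-verified Lean document; each statement's English description precedes it below -/
import Mathlib

section
/- Let f(y) = 1 + bδ φ_Y((y-1/2)/δ) on [0,1] with φ_Y the hat function, revenue R(y) = y(1-F(y)), and optimal price p* = argmax_{y∈[0,1]} R(y). Suppose C* ∈ (0,2), 0 < b < 4 - 2C*, and δ > 0 is sufficiently small. Then p* ∈ (1/2 - δ, 1/2 - bδ/8); in particular |p* - 1/2| ≥ bδ/8, and p* lies in the interior of [0,1] in a region where R is twice differentiable. -/
open Set

noncomputable def phiY (t : ℝ) : ℝ :=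
  if t ∈ Set.Icc (-1:ℝ) 0 then t + 1
  else if t ∈ Set.Icc (0:ℝ) 2 then -t + 1
  else if t ∈ Set.Icc (2:ℝ) 3 then t - 3
  else 0

lemma phiY_left {s : ℝ} (h : s ≤ -1) : phiY s = 0 := by
  unfold phiY; simp only [Set.mem_Icc]
  split_ifs with h1 h2 h3
  · linarith [h1.1]
  · linarith [h2.1]
  · linarith [h3.1]
  · rfl

lemma phiY_right {s : ℝ} (h : 3 ≤ s) : phiY s = 0 := by
  unfold phiY; simp only [Set.mem_Icc]
  split_ifs with h1 h2 h3
  · linarith [h1.2]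
  · linarith [h2.2]
  · linarith [h3.2]
  · rfl

lemma phiY_a {s : ℝ} (h1 : -1 ≤ s) (h2 : s ≤ 0) : phiY s = s + 1 := by
  unfold phiY; simp only [Set.mem_Icc]
  rw [if_pos ⟨h1, h2⟩]

lemma phiY_b {s : ℝ} (h1 : 0 ≤ s) (h2 : s ≤ 2) : phiY s = -s + 1 := by
  unfold phiY; simp only [Set.mem_Icc]
  split_ifs with ha hb hc
  · linarith [ha.2]
  · rfl
  · linarith [hc.1]
  · exact absurd ⟨h1, h2⟩ hb

lemma phiY_c {s : ℝ} (h1 : 2 ≤ s) (h2 : s ≤ 3) : phiY s = s - 3 := by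
  unfold phiY; simp only [Set.mem_Icc]
  split_ifs with ha hb hc
  · linarith [ha.1]
  · linarith [hb.2]
  · rfl
  · exact absurd ⟨h1, h2⟩ hc

lemma phiY_eq (t : ℝ) :
    phiY t = max 0 (min (t+1) (1-t)) - max 0 (min (t-1) (3-t)) := by
  unfold phiY
  simp only [Set.mem_Icc]
  rcases lt_or_ge t (-1) with c | c
  · rw [if_neg (by intro h; linarith [h.1]), if_neg (by intro h; linarith [h.1]),
      if_neg (by intro h; linarith [h.1]),
      min_eq_left (by linarith), min_eq_left (by linarith),
      max_eq_left (by linarith), max_eq_left (by linarith)]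
    ring
  rcases le_or_gt t 0 with c2 | c2
  · rw [if_pos ⟨c, c2⟩,
      min_eq_left (by linarith), min_eq_left (by linarith),
      max_eq_right (by linarith), max_eq_left (by linarith)]
    ring
  rcases le_or_gt t 2 with c3 | c3
  · rw [if_neg (by intro h; linarith [h.2]), if_pos ⟨by linarith, c3⟩]
    rcases le_or_gt t 1 with c4 | c4
    · rw [min_eq_right (by linarith), max_eq_right (by linarith),
        min_eq_left (by linarith), max_eq_left (by linarith)]
      ring
    · rw [min_eq_right (by linarith), max_eq_left (by linarith),
        min_eq_left (by linarith), max_eq_right (by linarith)]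
      ring
  rcases le_or_gt t 3 with c4 | c4
  · rw [if_neg (by intro h; linarith [h.2]), if_neg (by intro h; linarith [h.1]),
      if_pos ⟨by linarith, c4⟩,
      min_eq_right (by linarith), max_eq_left (by linarith),
      min_eq_right (by linarith), max_eq_right (by linarith)]
    ring
  · rw [if_neg (by intro h; linarith [h.2]), if_neg (by intro h; linarith [h.2]),
      if_neg (by intro h; linarith [h.2]),
      min_eq_right (by linarith), max_eq_left (by linarith),
      min_eq_right (by linarith), max_eq_left (by linarith)]
    ring

lemma phiY_cont : Continuous phiY := by
  have h : phiY = fun t => max 0 (min (t+1) (1-t)) - max 0 (min (t-1) (3-t)) :=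
    funext phiY_eq
  rw [h]; fun_prop

lemma integral_affine (p q A B : ℝ) :
    ∫ t in p..q, (A + B * t) = (A*q + B/2*q^2) - (A*p + B/2*p^2) := by
  apply intervalIntegral.integral_eq_sub_of_hasDerivAt
  · intro t _
    have h : HasDerivAt (fun t : ℝ => A*t + B/2*t^2) (A + B*t) t := by
      have h1 : HasDerivAt (fun t : ℝ => A*t) A t := by
        simpa using (hasDerivAt_id t).const_mul A
      have h2 : HasDerivAt (fun t : ℝ => B/2*t^2) (B*t) t := by
        have := (hasDerivAt_pow 2 t).const_mul (B/2)
        refine this.congr_deriv ?_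
        ring
      exact h1.add h2
    exact h
  · exact (by fun_prop : Continuous fun t : ℝ => A + B * t).intervalIntegrable p q

lemma signMono (Cs b δ y : ℝ) (hC0 : 0<Cs) (hC2 : Cs<2) (hb0 : 0<b) (hb4 : b<4-2*Cs)
    (hδ : 0<δ) (hδ1 : δ<1/100) (hy1 : 1/2 - δ < y) (hy2 : y < 1/2 - 3*δ/4) :
    0 < 1 - (y + b/2*(y-1/2+δ)^2) - y*((1-b/2+b*δ)+b*y) := by
  nlinarith [sq_nonneg (y - 1/2 + δ), mul_pos hb0 hδ,
    mul_nonneg hb0.le (sq_nonneg (y - 1/2 + δ)), mul_pos hδ hδ,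
    mul_nonneg (mul_nonneg hb0.le (by linarith : (0:ℝ) ≤ y - 1/2 + δ)) (by linarith : (0:ℝ) ≤ 1 - y),
    mul_nonneg (by linarith : (0:ℝ) ≤ 4 - b) (by linarith : (0:ℝ) ≤ y - 1/2 + δ)]

lemma signA (Cs b δ y : ℝ) (hC0 : 0<Cs) (hC2 : Cs<2) (hb0 : 0<b) (hb4 : b<4-2*Cs)
    (hδ : 0<δ) (hδC : δ<Cs/100) (hδ1 : δ<1/100)
    (hy1 : 1/2 - b*δ/8 - b*Cs*δ/256 < y) (hy2 : y ≤ 1/2) :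
    1 - (y + b/2*(y-1/2+δ)^2) - y*((1-b/2+b*δ)+b*y) < 0 := by
  have hbr : (0:ℝ) < 1/4 - b/16 - Cs/128 - b*Cs/512 - δ*(1 - b/8 - b*Cs/256) := by
    nlinarith [mul_pos hb0 hδ, mul_nonneg (by linarith : (0:ℝ) ≤ 4 - b) hC0.le,
      mul_nonneg (mul_nonneg hb0.le hC0.le) hδ.le]
  have key2 : (2:ℝ) < (2 + b/2 - b*δ) * (1 - b/8 - b*Cs/256) := by
    nlinarith [mul_pos hb0 hbr]
  have key : 2*δ - (2 + b/2 - b*δ)*(δ - b*δ/8 - b*Cs*δ/256) < 0 := by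
    nlinarith [mul_pos hδ (by linarith : (0:ℝ) < (2 + b/2 - b*δ)*(1 - b/8 - b*Cs/256) - 2)]
  have hcoef : (0:ℝ) < 2 + b/2 - b*δ := by nlinarith
  nlinarith [key, mul_pos hcoef (by linarith : (0:ℝ) < y - (1/2 - b*δ/8 - b*Cs*δ/256)),
    mul_nonneg hb0.le (sq_nonneg (y - 1/2 + δ))]

lemma signB (Cs b δ y : ℝ) (hC0 : 0<Cs) (hC2 : Cs<2) (hb0 : 0<b) (hb4 : b<4-2*Cs)
    (hδ : 0<δ) (hδC : δ<Cs/100) (hδ1 : δ<1/100)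
    (hy1 : 1/2 < y) (hy2 : y ≤ 1/2 + 2*δ) :
    1 - (y + b*δ^2/2 + b*δ*(y-1/2) - b/2*(y-1/2)^2) - y*((1 + b*δ + b/2) - b*y) < 0 := by
  have hv0 : (0:ℝ) ≤ y - 1/2 := by linarith
  have hCbδ : (0:ℝ) ≤ Cs - b*δ := by nlinarith
  nlinarith [mul_nonneg hv0 (by linarith : (0:ℝ) ≤ 2 - b/2 - Cs),
    mul_nonneg (mul_nonneg hb0.le hv0) (by linarith : (0:ℝ) ≤ 1/2 + 2*δ - y),
    mul_nonneg hv0 hCbδ, mul_pos hb0 hδ, mul_pos (mul_pos hb0 hδ) hδ]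

lemma signC (Cs b δ y : ℝ) (hC0 : 0<Cs) (hC2 : Cs<2) (hb0 : 0<b) (hb4 : b<4-2*Cs)
    (hδ : 0<δ) (hδC : δ<Cs/100) (hδ1 : δ<1/100)
    (hy1 : 1/2 + 2*δ < y) (hy2 : y ≤ 1/2 + 3*δ) :
    1 - (y + 9*b*δ^2/2 + b/2*(y-1/2)^2 - 3*b*δ*(y-1/2)) - y*((1 - b/2 - 3*b*δ) + b*y) < 0 := by
  nlinarith [mul_nonneg (mul_nonneg hb0.le hδ.le) (by linarith : (0:ℝ) ≤ 1/2 + 3*δ - y),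
    mul_nonneg hb0.le (by linarith : (0:ℝ) ≤ y - 1/2 - 2*δ),
    mul_nonneg hb0.le (sq_nonneg (y - 1/2)),
    mul_nonneg (by linarith : (0:ℝ) ≤ 4 - b) hδ.le,
    mul_nonneg (by linarith : (0:ℝ) ≤ 4 - b) (mul_pos hδ hδ).le,
    mul_pos hδ (by linarith : (0:ℝ) < 1 - 100*δ), mul_pos hδ hδ, mul_pos hb0 hδ]

set_option maxHeartbeats 2000000 in
theorem stmt6 (Cs b : ℝ) (hC : Cs ∈ Ioo (0:ℝ) 2) (hb : b ∈ Ioo 0 (4 - 2 * Cs)) :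
    ∃ δ₀ > (0:ℝ), ∀ δ : ℝ, 0 < δ → δ < δ₀ →
      ∀ f F R : ℝ → ℝ,
        (∀ y, f y = 1 + b * δ * phiY ((y - 1/2) / δ)) →
        (∀ y, F y = ∫ t in (0:ℝ)..y, f t) →
        (∀ y, R y = y * (1 - F y)) →
        ∀ ps : ℝ, ps ∈ Icc (0:ℝ) 1 → IsMaxOn R (Icc (0:ℝ) 1) ps →
          ps ∈ Ioo (1/2 - δ) (1/2 - b * δ / 8) ∧
          b * δ / 8 ≤ |ps - 1/2| ∧
          ∃ ε > (0:ℝ), ∀ y ∈ Ioo (ps - ε) (ps + ε), DifferentiableAt ℝ (deriv R) y := by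
  obtain ⟨hC0, hC2⟩ := hC
  obtain ⟨hb0, hb4⟩ := hb
  refine ⟨min (Cs/100) (1/100), by positivity, ?_⟩
  intro δ hδ hδ0 f F R hf hF hR ps hps hmax
  have hδC : δ < Cs/100 := lt_of_lt_of_le hδ0 (min_le_left _ _)
  have hδ1 : δ < 1/100 := lt_of_lt_of_le hδ0 (min_le_right _ _)
  have hbb : b < 4 := by linarith
  have hδne : δ ≠ 0 := ne_of_gt hδ
  -- continuity of f
  have hfc : Continuous f := by
    have h : f = fun y => 1 + b * δ * phiY ((y - 1/2) / δ) := funext hf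
    rw [h]
    exact continuous_const.add (continuous_const.mul (phiY_cont.comp (by fun_prop)))
  -- derivative facts
  have hFd : ∀ y, HasDerivAt F (f y) y := by
    intro y
    exact (hfc.integral_hasStrictDerivAt 0 y).hasDerivAt.congr_of_eventuallyEq
      (Filter.Eventually.of_forall (fun x => hF x))
  have hRd : ∀ y, HasDerivAt R (1 - F y - y * f y) y := by
    intro y
    have h1 : HasDerivAt (fun y => y * (1 - F y)) (1 * (1 - F y) + y * (0 - f y)) y :=
      (hasDerivAt_id y).mul ((hasDerivAt_const y 1).sub (hFd y))
    have h2 : HasDerivAt R (1 * (1 - F y) + y * (0 - f y)) y :=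
      h1.congr_of_eventuallyEq (Filter.Eventually.of_forall (fun x => hR x))
    convert h2 using 1; ring
  have hdR : ∀ y, deriv R y = 1 - F y - y * f y := fun y => (hRd y).deriv
  have hFc : Continuous F := by
    rw [continuous_iff_continuousAt]; exact fun y => (hFd y).continuousAt
  have hRc : Continuous R := by
    have h : R = fun y => y * (1 - F y) := funext hR
    rw [h]; fun_prop
  -- pointwise values of f
  have hf0 : ∀ t : ℝ, t ≤ 1/2 - δ → f t = 1 := by
    intro t ht
    rw [hf t, phiY_left (by rw [div_le_iff₀ hδ]; linarith)]
    ring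
  have hf5 : ∀ t : ℝ, 1/2 + 3*δ ≤ t → f t = 1 := by
    intro t ht
    rw [hf t, phiY_right (by rw [le_div_iff₀ hδ]; linarith)]
    ring
  have hfA : ∀ t ∈ Icc (1/2-δ) (1/2:ℝ), f t = (1 - b/2 + b*δ) + b*t := by
    intro t ⟨ht1, ht2⟩
    rw [hf t, phiY_a (by rw [le_div_iff₀ hδ]; linarith)
      (by rw [div_le_iff₀ hδ]; linarith)]
    field_simp
    ring
  have hfB : ∀ t ∈ Icc (1/2:ℝ) (1/2+2*δ), f t = (1 + b*δ + b/2) - b*t := by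
    intro t ⟨ht1, ht2⟩
    rw [hf t, phiY_b (by rw [le_div_iff₀ hδ]; linarith) (by rw [div_le_iff₀ hδ]; linarith)]
    field_simp
    ring
  have hfC : ∀ t ∈ Icc (1/2+2*δ) (1/2+3*δ:ℝ), f t = (1 - b/2 - 3*b*δ) + b*t := by
    intro t ⟨ht1, ht2⟩
    rw [hf t, phiY_c (by rw [le_div_iff₀ hδ]; linarith) (by rw [div_le_iff₀ hδ]; linarith)]
    field_simp
    ring
  have hInt : ∀ a c : ℝ, IntervalIntegrable f MeasureTheory.volume a c :=
    fun a c => hfc.intervalIntegrable a c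
  -- piecewise formulas for F
  have hF1 : ∀ y ∈ Icc (0:ℝ) (1/2-δ), F y = y := by
    intro y ⟨hy1, hy2⟩
    rw [hF y]
    rw [intervalIntegral.integral_congr (g := fun t => (1:ℝ) + 0 * t)
      (fun t ht => by
        rw [uIcc_of_le hy1] at ht
        rw [hf0 t (le_trans ht.2 hy2)]; ring)]
    rw [integral_affine]; ring
  have hF2 : ∀ y ∈ Icc (1/2-δ) (1/2:ℝ), F y = y + b/2*(y-1/2+δ)^2 := by
    intro y ⟨hy1, hy2⟩
    have hsplit := intervalIntegral.integral_add_adjacent_intervals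
      (hInt 0 (1/2-δ)) (hInt (1/2-δ) y)
    rw [hF y, ← hsplit]
    have e1 : (∫ t in (0:ℝ)..(1/2-δ), f t) = 1/2 - δ := by
      rw [← hF (1/2-δ)]; exact hF1 _ ⟨by linarith, le_refl _⟩
    rw [e1, intervalIntegral.integral_congr (g := fun t => (1 - b/2 + b*δ) + b * t)
      (fun t ht => by
        rw [uIcc_of_le hy1] at ht
        exact hfA t ⟨ht.1, le_trans ht.2 hy2⟩)]
    rw [integral_affine]; ring
  have hF3 : ∀ y ∈ Icc (1/2:ℝ) (1/2+2*δ),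
      F y = y + b*δ^2/2 + b*δ*(y-1/2) - b/2*(y-1/2)^2 := by
    intro y ⟨hy1, hy2⟩
    have hsplit := intervalIntegral.integral_add_adjacent_intervals
      (hInt 0 (1/2)) (hInt (1/2) y)
    rw [hF y, ← hsplit]
    have e1 : (∫ t in (0:ℝ)..(1/2), f t) = 1/2 + b/2*δ^2 := by
      rw [← hF (1/2)]
      rw [hF2 (1/2) ⟨by linarith, le_refl _⟩]; ring
    rw [e1, intervalIntegral.integral_congr (g := fun t => (1 + b*δ + b/2) - b * t)
      (fun t ht => by
        rw [uIcc_of_le hy1] at ht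
        exact hfB t ⟨ht.1, le_trans ht.2 hy2⟩)]
    have : (∫ t in (1/2:ℝ)..y, ((1 + b*δ + b/2) - b * t)) =
        ∫ t in (1/2:ℝ)..y, ((1 + b*δ + b/2) + (-b) * t) := by
      congr 1; funext t; ring
    rw [this, integral_affine]; ring
  have hF4 : ∀ y ∈ Icc (1/2+2*δ) (1/2+3*δ:ℝ),
      F y = y + 9*b*δ^2/2 + b/2*(y-1/2)^2 - 3*b*δ*(y-1/2) := by
    intro y ⟨hy1, hy2⟩
    have hsplit := intervalIntegral.integral_add_adjacent_intervals
      (hInt 0 (1/2+2*δ)) (hInt (1/2+2*δ) y)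
    rw [hF y, ← hsplit]
    have e1 : (∫ t in (0:ℝ)..(1/2+2*δ), f t) = 1/2 + 2*δ + b/2*δ^2 := by
      rw [← hF (1/2+2*δ)]
      rw [hF3 (1/2+2*δ) ⟨by linarith, le_refl _⟩]; ring
    rw [e1, intervalIntegral.integral_congr (g := fun t => (1 - b/2 - 3*b*δ) + b * t)
      (fun t ht => by
        rw [uIcc_of_le hy1] at ht
        exact hfC t ⟨ht.1, le_trans ht.2 hy2⟩)]
    rw [integral_affine]; ring
  have hF5 : ∀ y ∈ Icc (1/2+3*δ:ℝ) 1, F y = y := by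
    intro y ⟨hy1, hy2⟩
    have hsplit := intervalIntegral.integral_add_adjacent_intervals
      (hInt 0 (1/2+3*δ)) (hInt (1/2+3*δ) y)
    rw [hF y, ← hsplit]
    have e1 : (∫ t in (0:ℝ)..(1/2+3*δ), f t) = 1/2 + 3*δ := by
      rw [← hF (1/2+3*δ)]
      rw [hF4 (1/2+3*δ) ⟨by linarith, le_refl _⟩]; ring
    rw [e1, intervalIntegral.integral_congr (g := fun t => (1:ℝ) + 0 * t)
      (fun t ht => by
        rw [uIcc_of_le hy1] at ht
        rw [hf5 t ht.1]; ring)]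
    rw [integral_affine]; ring
  -- strict monotonicity on the left
  have hmono : StrictMonoOn R (Icc 0 (1/2 - 3*δ/4)) := by
    apply strictMonoOn_of_deriv_pos (convex_Icc _ _) hRc.continuousOn
    intro y hy
    rw [interior_Icc] at hy
    obtain ⟨hy1, hy2⟩ := hy
    rw [hdR y]
    rcases le_or_gt y (1/2 - δ) with h | h
    · rw [show F y = y from hF1 y ⟨le_of_lt hy1, h⟩, hf0 y h]
      nlinarith
    · rw [hF2 y ⟨le_of_lt h, by linarith⟩, hfA y ⟨le_of_lt h, by linarith⟩]
      exact signMono Cs b δ y hC0 hC2 hb0 hb4 hδ hδ1 h hy2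
  -- strict antitonicity on the right
  have hanti : StrictAntiOn R (Icc (1/2 - b*δ/8 - b*Cs*δ/256) 1) := by
    apply strictAntiOn_of_deriv_neg (convex_Icc _ _) hRc.continuousOn
    intro y hy
    rw [interior_Icc] at hy
    obtain ⟨hy1, hy2⟩ := hy
    rw [hdR y]
    rcases le_or_gt y (1/2) with h | h
    · have hylow : 1/2 - δ ≤ y := by
        nlinarith [mul_nonneg (by linarith : (0:ℝ) ≤ 4 - b) hδ.le,
          mul_nonneg (mul_nonneg (by linarith : (0:ℝ) ≤ 4 - b) hC0.le) hδ.le,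
          mul_nonneg (by linarith : (0:ℝ) ≤ 2 - Cs) (mul_nonneg hb0.le hδ.le)]
      rw [hF2 y ⟨hylow, h⟩, hfA y ⟨hylow, h⟩]
      exact signA Cs b δ y hC0 hC2 hb0 hb4 hδ hδC hδ1 hy1 h
    rcases le_or_gt y (1/2 + 2*δ) with h2 | h2
    · rw [hF3 y ⟨le_of_lt h, h2⟩, hfB y ⟨le_of_lt h, h2⟩]
      exact signB Cs b δ y hC0 hC2 hb0 hb4 hδ hδC hδ1 h h2
    rcases le_or_gt y (1/2 + 3*δ) with h3 | h3
    · rw [hF4 y ⟨le_of_lt h2, h3⟩, hfC y ⟨le_of_lt h2, h3⟩]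
      exact signC Cs b δ y hC0 hC2 hb0 hb4 hδ hδC hδ1 h2 h3
    · rw [hF5 y ⟨le_of_lt h3, le_of_lt hy2⟩, hf5 y (le_of_lt h3)]
      linarith
  -- locate ps
  have hps1 : 1/2 - δ < ps := by
    by_contra hcon
    push_neg at hcon
    have hy1mem : (1/2 - 3*δ/4 : ℝ) ∈ Icc (0:ℝ) 1 := ⟨by linarith, by linarith⟩
    have h1 : R ps < R (1/2 - 3*δ/4) :=
      hmono ⟨hps.1, by linarith⟩ ⟨by linarith, le_refl _⟩ (by linarith)
    have h2 : R (1/2 - 3*δ/4) ≤ R ps := hmax hy1mem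
    linarith
  have hps2 : ps < 1/2 - b*δ/8 := by
    by_contra hcon
    push_neg at hcon
    have hbCsδ : 0 < b*Cs*δ/256 := by positivity
    have hy2mem : (1/2 - b*δ/8 - b*Cs*δ/256 : ℝ) ∈ Icc (0:ℝ) 1 := by
      constructor <;>
      nlinarith [mul_nonneg (by linarith : (0:ℝ) ≤ 4 - b) hδ.le,
        mul_nonneg (mul_nonneg (by linarith : (0:ℝ) ≤ 4 - b) hC0.le) hδ.le,
        mul_nonneg (by linarith : (0:ℝ) ≤ 2 - Cs) (mul_nonneg hb0.le hδ.le),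
        mul_pos hb0 hδ, mul_pos (mul_pos hb0 hC0) hδ]
    have h1 : R ps < R (1/2 - b*δ/8 - b*Cs*δ/256) :=
      hanti ⟨le_refl _, hy2mem.2⟩ ⟨by linarith, hps.2⟩ (by linarith)
    have h2 : R (1/2 - b*δ/8 - b*Cs*δ/256) ≤ R ps := hmax hy2mem
    linarith
  refine ⟨⟨hps1, hps2⟩, ?_, ?_⟩
  · rw [abs_of_nonpos (by nlinarith [mul_pos hb0 hδ] : ps - 1/2 ≤ 0)]
    linarith
  · refine ⟨min (ps - (1/2 - δ)) (1/2 - b*δ/8 - ps), by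
      apply lt_min <;> linarith, ?_⟩
    intro y hy
    obtain ⟨hy1, hy2⟩ := hy
    have hylow : 1/2 - δ < y :=
      lt_of_le_of_lt (by linarith [min_le_left (ps - (1/2 - δ)) (1/2 - b*δ/8 - ps)]) hy1
    have hyhigh : y < 1/2 := by
      have h := min_le_right (ps - (1/2 - δ)) (1/2 - b*δ/8 - ps)
      nlinarith [mul_pos hb0 hδ]
    have hg : DifferentiableAt ℝ
        (fun x : ℝ => 1 - (x + b/2*(x-1/2+δ)^2) - x*((1-b/2+b*δ)+b*x)) y := by
      fun_prop
    have heq : deriv R =ᶠ[nhds y]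
        (fun x : ℝ => 1 - (x + b/2*(x-1/2+δ)^2) - x*((1-b/2+b*δ)+b*x)) := by
      filter_upwards [Ioo_mem_nhds hylow hyhigh] with x hx
      rw [hdR x, hF2 x ⟨hx.1.le, hx.2.le⟩, hfA x ⟨hx.1.le, hx.2.le⟩]
    exact (Filter.EventuallyEq.differentiableAt_iff heq).2 hg
end

section
/- Let f₁(y) = 1 on [0,1] and f₂(y) = 1 + aδ φ_Y((y-1/2)/δ) where φ_Y is the hat function, a > 0, aδ ≤ 1/2, and δ > 0 is small enough that the perturbation is supported in [0,1]. Then the squared Hellinger distance satisfies H²(F₁‖F₂) = 2(1 - ∫_0^1 √(f₂(y)) dy) ≤ (2√2/3) a² δ³. -/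
open Set

open intervalIntegral MeasureTheory

lemma phiY_measurable : Measurable phiY := by
  unfold phiY
  exact Measurable.ite measurableSet_Icc (measurable_id.add_const 1) <|
    Measurable.ite measurableSet_Icc (measurable_id.neg.add_const 1) <|
    Measurable.ite measurableSet_Icc (measurable_id.sub_const 3) measurable_const

lemma phiY_abs_le (t : ℝ) : |phiY t| ≤ 1 := by
  unfold phiY
  split_ifs with h1 h2 h3 <;> rw [abs_le] <;>
    first
    | (obtain ⟨u, v⟩ := h1; constructor <;> linarith)
    | (obtain ⟨u, v⟩ := h2; constructor <;> linarith)
    | (obtain ⟨u, v⟩ := h3; constructor <;> linarith)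
    | (constructor <;> norm_num)

lemma phiY_zero {t : ℝ} (h : t ≤ -1 ∨ 3 ≤ t) : phiY t = 0 := by
  unfold phiY
  rcases h with h | h <;> split_ifs with h1 h2 h3 <;>
    first
    | rfl
    | (obtain ⟨u, v⟩ := h1; linarith)
    | (obtain ⟨u, v⟩ := h2; linarith)
    | (obtain ⟨u, v⟩ := h3; linarith)

lemma phiY_on1 {t : ℝ} (h : t ∈ Set.Icc (-1:ℝ) 0) : phiY t = t + 1 := by
  unfold phiY; rw [if_pos h]

lemma phiY_on2 {t : ℝ} (h : t ∈ Set.Icc (0:ℝ) 2) : phiY t = -t + 1 := by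
  unfold phiY
  split_ifs with h1
  · have : t = 0 := le_antisymm h1.2 h.1
    rw [this]; norm_num
  · rfl

lemma phiY_on3 {t : ℝ} (h : t ∈ Set.Icc (2:ℝ) 3) : phiY t = t - 3 := by
  unfold phiY
  split_ifs with h1 h2
  · exact absurd h1.2 (by linarith [h.1])
  · have : t = 2 := le_antisymm h2.2 h.1
    rw [this]; norm_num
  · rfl

lemma bdd_intervalIntegrable {f : ℝ → ℝ} (hm : Measurable f) {C : ℝ}
    (hb : ∀ x, |f x| ≤ C) (a b : ℝ) : IntervalIntegrable f volume a b := by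
  rw [intervalIntegrable_iff]
  refine Integrable.mono' (g := fun _ => C) (integrableOn_const measure_Ioc_lt_top.ne)
    hm.aestronglyMeasurable.restrict (ae_of_all _ fun x => ?_)
  simpa [Real.norm_eq_abs] using hb x

lemma phiY_ii (a b : ℝ) : IntervalIntegrable phiY volume a b :=
  bdd_intervalIntegrable phiY_measurable phiY_abs_le a b

lemma phiY_sq_ii (a b : ℝ) : IntervalIntegrable (fun t => (phiY t)^2) volume a b := by
  refine bdd_intervalIntegrable (phiY_measurable.pow_const 2) (C := 1) (fun x => ?_) a b
  rw [abs_pow, ← one_pow 2]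
  exact pow_le_pow_left₀ (abs_nonneg _) (phiY_abs_le x) 2

lemma int_piece1 : ∫ t in (-1:ℝ)..0, (t + 1) = 1/2 := by
  simp [integral_add intervalIntegrable_id intervalIntegrable_const, integral_id]; norm_num

lemma int_piece2 : ∫ t in (0:ℝ)..2, (-t + 1) = 0 := by
  have h : ∀ t ∈ Set.uIcc (0:ℝ) 2, -t + 1 = 1 - t := fun t _ => by ring
  rw [integral_congr h, integral_sub intervalIntegrable_const intervalIntegrable_id,
    integral_id]
  simp
  norm_num

lemma int_piece3 : ∫ t in (2:ℝ)..3, (t - 3) = -(1/2) := by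
  simp [integral_sub intervalIntegrable_id intervalIntegrable_const, integral_id]; norm_num

lemma int_sq1 : ∫ t in (-1:ℝ)..0, (t + 1)^2 = 1/3 := by
  rw [show (∫ t in (-1:ℝ)..0, (t + 1)^2) = ∫ t in (-1:ℝ)..0, (fun x => x^2) (t + 1) from rfl,
    integral_comp_add_right (fun x => x^2) 1, integral_pow]
  norm_num

lemma int_sq2 : ∫ t in (0:ℝ)..2, (-t + 1)^2 = 2/3 := by
  have : ∀ t : ℝ, (-t + 1)^2 = (fun x => x^2) (t - 1) := by intro t; ring_nf
  rw [integral_congr (fun t _ => this t), integral_comp_sub_right (fun x => x^2) 1, integral_pow]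
  norm_num

lemma int_sq3 : ∫ t in (2:ℝ)..3, (t - 3)^2 = 1/3 := by
  rw [show (∫ t in (2:ℝ)..3, (t - 3)^2) = ∫ t in (2:ℝ)..3, (fun x => x^2) (t - 3) from rfl,
    integral_comp_sub_right (fun x => x^2) 3, integral_pow]
  norm_num

lemma int_phiY : ∫ t in (-1:ℝ)..3, phiY t = 0 := by
  have e1 : ∫ t in (-1:ℝ)..0, phiY t = ∫ t in (-1:ℝ)..0, (t + 1) :=
    integral_congr fun t ht => phiY_on1 (by rwa [uIcc_of_le (by norm_num)] at ht)
  have e2 : ∫ t in (0:ℝ)..2, phiY t = ∫ t in (0:ℝ)..2, (-t + 1) :=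
    integral_congr fun t ht => phiY_on2 (by rwa [uIcc_of_le (by norm_num)] at ht)
  have e3 : ∫ t in (2:ℝ)..3, phiY t = ∫ t in (2:ℝ)..3, (t - 3) :=
    integral_congr fun t ht => phiY_on3 (by rwa [uIcc_of_le (by norm_num)] at ht)
  rw [← integral_add_adjacent_intervals (phiY_ii (-1) 0) (phiY_ii 0 3),
      ← integral_add_adjacent_intervals (phiY_ii 0 2) (phiY_ii 2 3),
      e1, e2, e3, int_piece1, int_piece2, int_piece3]
  norm_num

lemma int_phiY_sq : ∫ t in (-1:ℝ)..3, (phiY t)^2 = 4/3 := by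
  have e1 : ∫ t in (-1:ℝ)..0, (phiY t)^2 = ∫ t in (-1:ℝ)..0, (t + 1)^2 :=
    integral_congr fun t ht => by rw [phiY_on1 (by rwa [uIcc_of_le (by norm_num)] at ht)]
  have e2 : ∫ t in (0:ℝ)..2, (phiY t)^2 = ∫ t in (0:ℝ)..2, (-t + 1)^2 :=
    integral_congr fun t ht => by rw [phiY_on2 (by rwa [uIcc_of_le (by norm_num)] at ht)]
  have e3 : ∫ t in (2:ℝ)..3, (phiY t)^2 = ∫ t in (2:ℝ)..3, (t - 3)^2 :=
    integral_congr fun t ht => by rw [phiY_on3 (by rwa [uIcc_of_le (by norm_num)] at ht)]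
  rw [← integral_add_adjacent_intervals (phiY_sq_ii (-1) 0) (phiY_sq_ii 0 3),
      ← integral_add_adjacent_intervals (phiY_sq_ii 0 2) (phiY_sq_ii 2 3),
      e1, e2, e3, int_sq1, int_sq2, int_sq3]
  norm_num

lemma int_ext {f : ℝ → ℝ} (hf : ∀ a b, IntervalIntegrable f volume a b)
    (h0 : ∀ t, t ≤ -1 ∨ 3 ≤ t → f t = 0) {L R : ℝ} (hL : L ≤ -1) (hR : 3 ≤ R) :
    ∫ t in L..R, f t = ∫ t in (-1:ℝ)..3, f t := by
  rw [← integral_add_adjacent_intervals (hf L (-1)) (hf (-1) R),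
      ← integral_add_adjacent_intervals (hf (-1) 3) (hf 3 R)]
  have h1 : ∫ t in L..(-1:ℝ), f t = 0 := by
    rw [integral_congr (g := fun _ => (0:ℝ))
      (fun t ht => h0 t (Or.inl ((uIcc_of_le hL ▸ ht).2)))]
    simp
  have h2 : ∫ t in (3:ℝ)..R, f t = 0 := by
    rw [integral_congr (g := fun _ => (0:ℝ))
      (fun t ht => h0 t (Or.inr ((uIcc_of_le hR ▸ ht).1)))]
    simp
  rw [h1, h2]; ring

lemma sqrt_lower {u : ℝ} (hu : |u| ≤ 1/2) :
    1 + u/2 - (Real.sqrt 2 / 4) * u^2 ≤ Real.sqrt (1+u) := by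
  obtain ⟨hu1, hu2⟩ := abs_le.mp hu
  have h1 : (0:ℝ) ≤ 1 + u := by linarith
  set r := Real.sqrt 2 with hr
  set s := Real.sqrt (1+u) with hs
  have hs2 : s^2 = 1 + u := Real.sq_sqrt h1
  have hsnn : 0 ≤ s := Real.sqrt_nonneg _
  have hrnn : 0 ≤ r := Real.sqrt_nonneg _
  have hr2 : r^2 = 2 := Real.sq_sqrt (by norm_num)
  have hr1 : 1 ≤ r := by nlinarith
  have hslb : 1/2 ≤ s^2 := by rw [hs2]; linarith
  have h2s : r ≤ 2*s := by nlinarith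
  have key : 0 ≤ (r/4)*(s+1)^2 - 1/2 := by nlinarith
  nlinarith [mul_nonneg (sq_nonneg (s-1)) key]

theorem stmt7 (a δ : ℝ) (ha : 0 < a) (haδ : a * δ ≤ 1/2)
    (hδ : δ ∈ Ioc (0:ℝ) (1/8))
    (f₂ : ℝ → ℝ) (hf₂ : ∀ y, f₂ y = 1 + a * δ * phiY ((y - 1/2) / δ)) :
    (∫ y in (0:ℝ)..1, (1 - Real.sqrt (f₂ y)) ^ 2)
      = 2 * (1 - ∫ y in (0:ℝ)..1, Real.sqrt (f₂ y)) ∧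
    2 * (1 - ∫ y in (0:ℝ)..1, Real.sqrt (f₂ y))
      ≤ (2 * Real.sqrt 2 / 3) * a ^ 2 * δ ^ 3 := by
  obtain ⟨hδ0, hδ8⟩ := hδ
  have hf : f₂ = fun y => 1 + a * δ * phiY ((y - 1/2) / δ) := funext hf₂
  subst hf
  beta_reduce
  have haδ0 : 0 < a * δ := mul_pos ha hδ0
  set ψ : ℝ → ℝ := fun y => phiY ((y - 1/2) / δ) with hψdef
  have hψm : Measurable ψ :=
    phiY_measurable.comp ((measurable_id.sub_const (1/2)).div_const δ)
  have hψb : ∀ y, |ψ y| ≤ 1 := fun y => phiY_abs_le _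
  have hψii : ∀ u v : ℝ, IntervalIntegrable ψ volume u v :=
    bdd_intervalIntegrable hψm hψb
  have hψsqii : ∀ u v : ℝ, IntervalIntegrable (fun y => (ψ y)^2) volume u v := by
    refine bdd_intervalIntegrable (hψm.pow_const 2) (C := 1) (fun x => ?_)
    rw [abs_pow, ← one_pow 2]
    exact pow_le_pow_left₀ (abs_nonneg _) (hψb x) 2
  -- change of variables
  have hL : (0 - 1/2 : ℝ)/δ ≤ -1 := by
    rw [div_le_iff₀ hδ0]; linarith
  have hR : (3:ℝ) ≤ (1 - 1/2 : ℝ)/δ := by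
    rw [le_div_iff₀ hδ0]; linarith
  have hcov : ∀ F : ℝ → ℝ, (∀ u v : ℝ, IntervalIntegrable F volume u v) →
      (∀ t, t ≤ -1 ∨ 3 ≤ t → F t = 0) →
      ∫ y in (0:ℝ)..1, F ((y - 1/2) / δ) = δ * ∫ t in (-1:ℝ)..3, F t := by
    intro F hFi hF0
    rw [show (∫ y in (0:ℝ)..1, F ((y - 1/2) / δ))
        = ∫ y in (0:ℝ)..1, (fun x => F (x / δ)) (y - 1/2) from rfl,
      integral_comp_sub_right (fun x => F (x / δ)) (1/2),
      integral_comp_div F hδ0.ne', smul_eq_mul,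
      int_ext hFi hF0 hL hR]
  have hI1 : ∫ y in (0:ℝ)..1, ψ y = 0 := by
    rw [hψdef, hcov phiY phiY_ii (fun t ht => phiY_zero ht), int_phiY, mul_zero]
  have hI2 : ∫ y in (0:ℝ)..1, (ψ y)^2 = δ * (4/3) := by
    rw [hψdef, show (∫ y in (0:ℝ)..1, (phiY ((y - 1/2)/δ))^2)
        = ∫ y in (0:ℝ)..1, (fun t => (phiY t)^2) ((y - 1/2)/δ) from rfl,
      hcov (fun t => (phiY t)^2) phiY_sq_ii
        (fun t ht => by show (phiY t)^2 = 0; rw [phiY_zero ht]; norm_num), int_phiY_sq]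
  -- bounds on f₂
  have hub : ∀ y, |a * δ * ψ y| ≤ 1/2 := by
    intro y
    rw [abs_mul, abs_of_nonneg haδ0.le]
    calc a * δ * |ψ y| ≤ a * δ * 1 := by
          exact mul_le_mul_of_nonneg_left (hψb y) haδ0.le
      _ ≤ 1/2 := by linarith
  have hf2nn : ∀ y, (0:ℝ) ≤ 1 + a * δ * ψ y := by
    intro y
    have := abs_le.mp (hub y)
    linarith [this.1]
  -- integrability of sqrt f₂
  have hsqm : Measurable (fun y => Real.sqrt (1 + a * δ * ψ y)) :=
    Real.continuous_sqrt.measurable.comp (measurable_const.add (measurable_const.mul hψm))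
  have hsqb : ∀ y, |Real.sqrt (1 + a * δ * ψ y)| ≤ 2 := by
    intro y
    rw [abs_of_nonneg (Real.sqrt_nonneg _)]
    have h4 : (1 + a * δ * ψ y) ≤ 4 := by
      have := abs_le.mp (hub y); linarith [this.2]
    calc Real.sqrt (1 + a * δ * ψ y) ≤ Real.sqrt 4 := Real.sqrt_le_sqrt h4
      _ = 2 := by
          rw [show (4:ℝ) = 2^2 by norm_num, Real.sqrt_sq (by norm_num : (0:ℝ) ≤ 2)]
  have hsqii : IntervalIntegrable (fun y => Real.sqrt (1 + a * δ * ψ y)) volume 0 1 :=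
    bdd_intervalIntegrable hsqm hsqb 0 1
  have hf2ii : IntervalIntegrable (fun y => 1 + a * δ * ψ y) volume 0 1 :=
    intervalIntegrable_const.add ((hψii 0 1).const_mul _)
  -- integral of f₂ equals 1
  have hintf2 : ∫ y in (0:ℝ)..1, (1 + a * δ * ψ y) = 1 := by
    rw [integral_add intervalIntegrable_const ((hψii 0 1).const_mul _),
      intervalIntegral.integral_const_mul, hI1]
    simp
  constructor
  · -- first part
    have hpt : ∀ y ∈ uIcc (0:ℝ) 1,
        (1 - Real.sqrt (1 + a * δ * ψ y))^2
          = 1 - 2 * Real.sqrt (1 + a * δ * ψ y) + (1 + a * δ * ψ y) := by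
      intro y _
      have := Real.sq_sqrt (hf2nn y)
      nlinarith [this]
    rw [integral_congr hpt,
      integral_add ((_root_.intervalIntegrable_const).sub (hsqii.const_mul 2)) hf2ii,
      integral_sub _root_.intervalIntegrable_const (hsqii.const_mul 2),
      intervalIntegral.integral_const_mul, hintf2]
    simp only [hψdef]
    simp
    ring
  · -- second part
    set r := Real.sqrt 2 with hrdef
    set g : ℝ → ℝ := fun y => 1 + (a * δ / 2) * ψ y - (r / 4 * (a * δ)^2) * (ψ y)^2
      with hgdef
    have hgii : IntervalIntegrable g volume 0 1 :=
      (intervalIntegrable_const.add ((hψii 0 1).const_mul _)).sub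
        ((hψsqii 0 1).const_mul _)
    have hglow : ∀ y ∈ Set.Icc (0:ℝ) 1, g y ≤ Real.sqrt (1 + a * δ * ψ y) := by
      intro y _
      have h1 : g y = 1 + (a * δ * ψ y)/2 - (r / 4) * (a * δ * ψ y)^2 := by
        rw [hgdef]; ring
      rw [h1]
      exact sqrt_lower (hub y)
    have hintg : ∫ y in (0:ℝ)..1, g y = 1 - (r / 3) * (a * δ)^2 * δ := by
      rw [hgdef]
      rw [integral_sub (intervalIntegrable_const.add ((hψii 0 1).const_mul _))
          ((hψsqii 0 1).const_mul _),
        integral_add intervalIntegrable_const ((hψii 0 1).const_mul _),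
        intervalIntegral.integral_const_mul, intervalIntegral.integral_const_mul, hI1, hI2]
      simp
      ring
    have hmono : ∫ y in (0:ℝ)..1, g y
        ≤ ∫ y in (0:ℝ)..1, Real.sqrt (1 + a * δ * ψ y) :=
      integral_mono_on (by norm_num) hgii hsqii hglow
    rw [hintg] at hmono
    have : 2 * r / 3 * a^2 * δ^3 = 2 * ((r/3) * (a*δ)^2 * δ) := by ring
    rw [hrdef] at *
    nlinarith [hmono]
end
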